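/- Let φ = (ψ, τ) : M → ℝ^{n+1} × ℝ be an immersion of an n-manifold whose induced pseudo-Riemannian metric (for the signature (p+1,q+1) inner product on ℝ^{n+2}) is nondegenerate, and let ν̃ = (ν, 1) be a null normal field along φ. Set σ := ψ − τν. Then the map (σ, ν) : M → ℝ^{n+1} × ℝ^{n+1} is an immersion, i.e. at every point there is no nonzero tangent vector v with dσ(v) = 0 and dν(v) = 0. -/

import Mathlib

/-- The pseudo-Euclidean inner product of signature `(r, s)` on `Fin m → ℝ` (`m = r + s`). -/
noncomputable def pseudoInner (r m : ℕ) (x y : Fin m → ℝ) : ℝ :=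
  ∑ i : Fin m, (if (i : ℕ) < r then (1 : ℝ) else -1) * x i * y i

/-- The inner product of signature `(p+1, q+1)` on `ℝ^{n+2} = ℝ^{n+1} × ℝ`,
the last coordinate counting negatively. -/
noncomputable def ambientForm (p n : ℕ) (x y : (Fin (n + 1) → ℝ) × ℝ) : ℝ :=
  pseudoInner (p + 1) (n + 1) x.1 y.1 - x.2 * y.2

lemma pseudoInner_smul_left (r m : ℕ) (c : ℝ) (x y : Fin m → ℝ) :
    pseudoInner r m (c • x) y = c * pseudoInner r m x y := by
  simp only [pseudoInner, Finset.mul_sum]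
  exact Finset.sum_congr rfl fun i _ => by simp [Pi.smul_apply]; ring

lemma pseudoInner_comm (r m : ℕ) (x y : Fin m → ℝ) :
    pseudoInner r m x y = pseudoInner r m y x := by
  exact Finset.sum_congr rfl fun i _ => by ring

lemma ambientForm_comm (p n : ℕ) (x y : (Fin (n + 1) → ℝ) × ℝ) :
    ambientForm p n x y = ambientForm p n y x := by
  simp [ambientForm, pseudoInner_comm, mul_comm]

theorem stmt_15 {E : Type*} [NormedAddCommGroup E] [NormedSpace ℝ E]
    [FiniteDimensional ℝ E] (n p q : ℕ) (hpq : p + q = n)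
    (hdim : Module.finrank ℝ E = n)
    (ψ : E → Fin (n + 1) → ℝ) (τ : E → ℝ) (ν : E → Fin (n + 1) → ℝ)
    (hψ : Differentiable ℝ ψ) (hτ : Differentiable ℝ τ) (hν : Differentiable ℝ ν)
    (himm : ∀ x, Function.Injective (fderiv ℝ (fun y => (ψ y, τ y)) x))
    (hnd : ∀ x (v : E),
      (∀ w : E, ambientForm p n (fderiv ℝ (fun y => (ψ y, τ y)) x v)
        (fderiv ℝ (fun y => (ψ y, τ y)) x w) = 0) → v = 0)
    (hnull : ∀ x, pseudoInner (p + 1) (n + 1) (ν x) (ν x) = 1)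
    (hnormal : ∀ x (v : E),
      ambientForm p n (fderiv ℝ (fun y => (ψ y, τ y)) x v) (ν x, 1) = 0) :
    ∀ x (v : E),
      fderiv ℝ (fun y => ψ y - τ y • ν y) x v = 0 →
      fderiv ℝ ν x v = 0 → v = 0 := by
  intro x v hσ hν0
  have hφ : fderiv ℝ (fun y => (ψ y, τ y)) x = (fderiv ℝ ψ x).prod (fderiv ℝ τ x) :=
    (hψ x).fderiv_prodMk (hτ x)
  have hsmul : fderiv ℝ (fun y => τ y • ν y) x
      = τ x • fderiv ℝ ν x + (fderiv ℝ τ x).smulRight (ν x) :=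
    fderiv_smul (hτ x) (hν x)
  have hσd : fderiv ℝ (fun y => ψ y - τ y • ν y) x v
      = fderiv ℝ ψ x v - (τ x • fderiv ℝ ν x v + fderiv ℝ τ x v • ν x) := by
    rw [fderiv_fun_sub (g := fun y => τ y • ν y) (hψ x) ((hτ x).smul (hν x))]
    simp [hsmul]
  have hkey : fderiv ℝ ψ x v = fderiv ℝ τ x v • ν x := by
    rw [hσd, hν0] at hσ
    simpa [sub_eq_zero] using hσ
  refine hnd x v fun w => ?_
  rw [hφ]
  simp only [ContinuousLinearMap.prod_apply, hkey]
  set c := fderiv ℝ τ x v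
  have : ambientForm p n (c • ν x, c) (fderiv ℝ ψ x w, fderiv ℝ τ x w)
      = c * ambientForm p n (ν x, 1) (fderiv ℝ ψ x w, fderiv ℝ τ x w) := by
    simp [ambientForm, pseudoInner_smul_left]; ring
  rw [this, ambientForm_comm]
  have h2 := hnormal x w
  rw [hφ] at h2
  simp only [ContinuousLinearMap.prod_apply] at h2
  rw [h2, mul_zero]
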